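/- arXiv:1908.07260 — 4 statements merged into one kernel-verified Lean document; each statement's English description precedes it below -/
import Mathlib

section
/- For every integer K ≥ 1 there exist q > 0 and B > 0 such that the following holds. For every t > q + 1, every n ≥ 1, every sequence of integers s_0, …, s_{n−1} with |s_k| ≤ K, and every w ∈ ℂ satisfying f^n(w) = E^n(t) and, for each 0 ≤ k ≤ n−1, Re f^k(w) ≥ q and (2s_k−1)π ≤ Im f^k(w) ≤ (2s_k+1)π, one has t − B ≤ Re w ≤ t + B. -/
open Complex Filter Set

/-- The function `f(z) = ∑_{k=0}^{p-1} exp(ω^k z)` with `ω = exp(2πi/p)`. -/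
noncomputable def f (p : ℕ) (z : ℂ) : ℂ :=
  ∑ k ∈ Finset.range p, Complex.exp (Complex.exp (2 * Real.pi * Complex.I / p) ^ k * z)

/-- The real function `E(t) = (1/e)·e^t = e^{t-1}`. -/
noncomputable def E (t : ℝ) : ℝ := Real.exp (t - 1)

lemma cos_lt_one_of (x : ℝ) (h0 : 0 < x) (h2 : x < 2 * Real.pi) : Real.cos x < 1 := by
  rcases lt_or_eq_of_le (Real.cos_le_one x) with h | h
  · exact h
  · exfalso
    rcases (Real.cos_eq_one_iff x).1 h with ⟨n, hn⟩
    have hpi : (0:ℝ) < 2 * Real.pi := by positivity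
    have h1 : (0:ℝ) < n * (2*Real.pi) := hn ▸ h0
    have h2' : (n:ℝ) * (2*Real.pi) < 1 * (2*Real.pi) := by rw [hn]; linarith
    have hn1 : (n:ℝ) < 1 := lt_of_mul_lt_mul_right h2' (le_of_lt hpi)
    have hn0 : (0:ℝ) < n := by nlinarith
    have : (0:ℤ) < n := by exact_mod_cast hn0
    have : (1:ℤ) ≤ n := this
    have : (1:ℝ) ≤ n := by exact_mod_cast this
    linarith

lemma exp_neg_le (s : ℝ) (h0 : 0 ≤ s) (h : s ≤ 1/2) : Real.exp (-(2*s)) ≤ 1 - s := by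
  have h1 : 1 + 2*s ≤ Real.exp (2*s) := by linarith [Real.add_one_le_exp (2*s)]
  rw [Real.exp_neg]
  rw [inv_le_comm₀ (Real.exp_pos _) (by nlinarith : (0:ℝ) < 1 - s)]
  calc (1-s)⁻¹ ≤ 1 + 2*s := by rw [inv_le_iff_one_le_mul₀ (by nlinarith)]; nlinarith
  _ ≤ Real.exp (2*s) := h1

lemma re_rot (a b : ℝ) (z : ℂ) : (((a:ℂ) + b*I) * z).re = a*z.re - b*z.im := by
  simp [add_mul, Complex.mul_re]; ring

lemma omega_pow (p k : ℕ) : Complex.exp (2 * Real.pi * Complex.I / p) ^ k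
    = ((Real.cos (2*Real.pi*k/p) : ℂ) + (Real.sin (2*Real.pi*k/p) : ℂ) * I) := by
  rw [← Complex.exp_nat_mul]
  have : (k:ℂ) * (2 * Real.pi * Complex.I / p) = ((2*Real.pi*k/p : ℝ) : ℂ) * I := by
    push_cast; ring
  rw [this, Complex.exp_mul_I, Complex.ofReal_cos, Complex.ofReal_sin]

lemma strip_est (p : ℕ) (hp : 3 ≤ p) (c C q : ℝ) (hq0 : 0 < q)
    (hcos : ∀ k : ℕ, k ≠ 0 → k < p → Real.cos (2*Real.pi*k/p) ≤ c)
    (hsum : ∀ x : ℝ, q ≤ x → ((p:ℝ)-1) * Real.exp (c*x + C) ≤ (1/2) * Real.exp x)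
    (z : ℂ) (hre : q ≤ z.re) (him : |z.im| ≤ C) :
    (1/2) * Real.exp z.re ≤ ‖f p z‖ ∧
      ‖f p z‖ ≤ (3/2) * Real.exp z.re := by
  have h0p : 0 ∈ Finset.range p := by simp; omega
  set S := ∑ k ∈ (Finset.range p).erase 0,
      Complex.exp (Complex.exp (2 * Real.pi * Complex.I / p) ^ k * z) with hSdef
  have hsplit : f p z = Complex.exp z + S := by
    rw [f, ← Finset.add_sum_erase _ _ h0p]
    norm_num
    rfl
  have hterm : ∀ k ∈ (Finset.range p).erase 0,
      ‖Complex.exp (Complex.exp (2 * Real.pi * Complex.I / p) ^ k * z)‖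
        ≤ Real.exp (c*z.re + C) := by
    intro k hk
    rw [Finset.mem_erase, Finset.mem_range] at hk
    rw [Complex.norm_exp, omega_pow, re_rot]
    apply Real.exp_le_exp.2
    have h1 : Real.cos (2*Real.pi*k/p) * z.re ≤ c * z.re :=
      mul_le_mul_of_nonneg_right (hcos k hk.1 hk.2) (by linarith)
    have h2 : -(Real.sin (2*Real.pi*k/p) * z.im) ≤ C := by
      calc -(Real.sin (2*Real.pi*k/p) * z.im) ≤ |Real.sin (2*Real.pi*k/p) * z.im| := neg_le_abs _
        _ = |Real.sin (2*Real.pi*k/p)| * |z.im| := abs_mul _ _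
        _ ≤ 1 * C := mul_le_mul (Real.abs_sin_le_one _) him (abs_nonneg _) zero_le_one
        _ = C := one_mul C
    linarith
  have hS : ‖S‖ ≤ (1/2) * Real.exp z.re := by
    calc ‖S‖ ≤ ∑ k ∈ (Finset.range p).erase 0,
        ‖Complex.exp (Complex.exp (2 * Real.pi * Complex.I / p) ^ k * z)‖ :=
          norm_sum_le _ _
      _ ≤ ∑ _k ∈ (Finset.range p).erase 0, Real.exp (c*z.re + C) :=
          Finset.sum_le_sum hterm
      _ = ((p:ℝ)-1) * Real.exp (c*z.re + C) := by
          rw [Finset.sum_const, Finset.card_erase_of_mem h0p, Finset.card_range]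
          rw [nsmul_eq_mul, Nat.cast_sub (by omega)]
          norm_num
      _ ≤ (1/2) * Real.exp z.re := hsum _ hre
  rw [hsplit]
  constructor
  · have h1 : ‖Complex.exp z‖ ≤ ‖Complex.exp z + S‖ + ‖S‖ := by
      calc ‖Complex.exp z‖ = ‖(Complex.exp z + S) + (-S)‖ := by ring_nf
        _ ≤ ‖Complex.exp z + S‖ + ‖-S‖ := norm_add_le _ _
        _ = ‖Complex.exp z + S‖ + ‖S‖ := by rw [norm_neg]
    rw [Complex.norm_exp] at h1
    linarith
  · calc ‖Complex.exp z + S‖ ≤ ‖Complex.exp z‖ + ‖S‖ :=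
        norm_add_le _ _
      _ ≤ Real.exp z.re + (1/2) * Real.exp z.re := by rw [Complex.norm_exp]; linarith
      _ = (3/2) * Real.exp z.re := by ring

set_option maxHeartbeats 1000000 in
theorem real_part_estimate_along_inverse_branches
    (p : ℕ) (hp : 3 ≤ p) (K : ℤ) (hK : 1 ≤ K) :
    ∃ q : ℝ, 0 < q ∧ ∃ B : ℝ, 0 < B ∧
      ∀ t : ℝ, q + 1 < t →
        ∀ n : ℕ, 1 ≤ n →
          ∀ s : ℕ → ℤ, (∀ k < n, |s k| ≤ K) →
            ∀ w : ℂ,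
              (f p)^[n] w = ((E^[n] t : ℝ) : ℂ) →
              (∀ k < n, q ≤ ((f p)^[k] w).re ∧
                (2 * (s k : ℝ) - 1) * Real.pi ≤ ((f p)^[k] w).im ∧
                ((f p)^[k] w).im ≤ (2 * (s k : ℝ) + 1) * Real.pi) →
              t - B ≤ w.re ∧ w.re ≤ t + B := by
  -- constants
  have hπ := Real.pi_pos
  have hK' : (1:ℝ) ≤ (K:ℝ) := by exact_mod_cast hK
  set C : ℝ := (2*(K:ℝ)+1)*Real.pi with hCdef
  have hC0 : 0 < C := by rw [hCdef]; positivity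
  have hne : (Finset.Icc 1 (p-1)).Nonempty := ⟨1, by simp; omega⟩
  set c : ℝ := (Finset.Icc 1 (p-1)).sup' hne (fun k : ℕ => Real.cos (2*Real.pi*k/p)) with hcdef
  have hc1 : c < 1 := by
    rw [hcdef]
    apply (Finset.sup'_lt_iff hne).2
    intro k hk
    rw [Finset.mem_Icc] at hk
    have hk1 : 1 ≤ k := hk.1
    have hkp : k < p := by omega
    have hp0 : (0:ℝ) < p := by positivity
    have hkr : (k:ℝ) < p := by exact_mod_cast hkp
    have hk1r : (1:ℝ) ≤ k := by exact_mod_cast hk1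
    apply cos_lt_one_of
    · positivity
    · rw [div_lt_iff₀ hp0]
      nlinarith
  have hcos : ∀ k : ℕ, k ≠ 0 → k < p → Real.cos (2*Real.pi*k/p) ≤ c := by
    intro k h1 h2
    rw [hcdef]
    exact Finset.le_sup' (fun k : ℕ => Real.cos (2*Real.pi*(k:ℝ)/p)) (show k ∈ Finset.Icc 1 (p-1) by rw [Finset.mem_Icc]; omega)
  set q : ℝ := max 3 (max (Real.log (4*C)) (Real.log (2*((p:ℝ)-1)*Real.exp C) / (1-c))) with hqdef
  have hq3 : (3:ℝ) ≤ q := le_max_left _ _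
  have hqpos : 0 < q := by linarith
  have hp1 : (2:ℝ) ≤ (p:ℝ) - 1 := by
    have : (3:ℝ) ≤ (p:ℝ) := by exact_mod_cast hp
    linarith
  have hq4C : 4*C ≤ Real.exp q := by
    have h1 : Real.log (4*C) ≤ q := le_trans (le_max_left _ _) (le_max_right _ _)
    calc 4*C = Real.exp (Real.log (4*C)) := (Real.exp_log (by positivity)).symm
      _ ≤ Real.exp q := Real.exp_le_exp.2 h1
  have hsum : ∀ x : ℝ, q ≤ x → ((p:ℝ)-1) * Real.exp (c*x + C) ≤ (1/2) * Real.exp x := by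
    intro x hx
    have hA : (0:ℝ) < 2*((p:ℝ)-1)*Real.exp C := by positivity
    have h1c : (0:ℝ) < 1 - c := by linarith
    have h1 : Real.log (2*((p:ℝ)-1)*Real.exp C) ≤ (1-c)*x := by
      have hq' : Real.log (2*((p:ℝ)-1)*Real.exp C) / (1-c) ≤ x :=
        le_trans (le_trans (le_max_right _ _) (le_max_right _ _)) hx
      calc Real.log (2*((p:ℝ)-1)*Real.exp C) = (Real.log (2*((p:ℝ)-1)*Real.exp C)/(1-c))*(1-c) := by
            field_simp
        _ ≤ x*(1-c) := mul_le_mul_of_nonneg_right hq' (le_of_lt h1c)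
        _ = (1-c)*x := by ring
    have h2 : 2*((p:ℝ)-1)*Real.exp C ≤ Real.exp ((1-c)*x) := by
      rw [← Real.exp_log hA]; exact Real.exp_le_exp.2 h1
    have e1 : Real.exp x = Real.exp ((1-c)*x) * Real.exp (c*x) := by
      rw [← Real.exp_add]; ring_nf
    have e2 : Real.exp (c*x + C) = Real.exp (c*x) * Real.exp C := by
      rw [← Real.exp_add]
    rw [e1, e2]
    nlinarith [Real.exp_pos (c*x), Real.exp_pos C]
  refine ⟨q, hqpos, 4, by norm_num, ?_⟩
  intro t ht n hn s hs w hw horb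
  set z : ℕ → ℂ := fun k => (f p)^[k] w with hzdef
  set y : ℕ → ℝ := fun k => E^[k] t with hydef
  have hzn : z n = ((y n : ℝ) : ℂ) := hw
  have hzsucc : ∀ k, z (k+1) = f p (z k) := fun k => Function.iterate_succ_apply' _ _ _
  have hysucc : ∀ k, y (k+1) = Real.exp (y k - 1) := by
    intro k
    show E^[k+1] t = _
    rw [Function.iterate_succ_apply']
    rfl
  have hyt : ∀ k, t ≤ y k := by
    intro k
    induction k with
    | zero => exact le_refl t
    | succ k ih =>
      rw [hysucc]
      have := Real.add_one_le_exp (y k - 1)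
      linarith
  have he2 : (2:ℝ) ≤ Real.exp 1 := by linarith [Real.add_one_le_exp 1]
  -- imaginary part bound along orbit
  have him : ∀ k, k < n → |(z k).im| ≤ C := by
    intro k hkn
    obtain ⟨_, h1, h2⟩ := horb k hkn
    have hsK : |(s k : ℝ)| ≤ (K:ℝ) := by exact_mod_cast hs k hkn
    rw [abs_le] at hsK
    rw [abs_le]
    constructor
    · have : (-(2*(K:ℝ)+1)) * Real.pi ≤ (2*(s k:ℝ) - 1)*Real.pi :=
        mul_le_mul_of_nonneg_right (by linarith) (le_of_lt hπ)
      rw [hCdef]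
      have h1' : (2*(s k:ℝ) - 1)*Real.pi ≤ (z k).im := h1
      nlinarith
    · have : (2*(s k:ℝ) + 1)*Real.pi ≤ (2*(K:ℝ)+1)*Real.pi :=
        mul_le_mul_of_nonneg_right (by linarith) (le_of_lt hπ)
      rw [hCdef]
      have h2' : (z k).im ≤ (2*(s k:ℝ) + 1)*Real.pi := h2
      linarith
  -- abs vs re bound
  have habs : ∀ j, 1 ≤ j → j ≤ n → ‖z j‖ ≤ (z j).re + C := by
    intro j h1 h2
    rcases lt_or_eq_of_le h2 with hlt | heq
    · have h := horb j hlt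
      have himj : |(z j).im| ≤ C := him j hlt
      have hre0 : 0 ≤ (z j).re := le_trans (le_of_lt hqpos) h.1
      calc ‖z j‖ ≤ |(z j).re| + |(z j).im| := Complex.norm_le_abs_re_add_abs_im _
        _ ≤ (z j).re + C := by rw [_root_.abs_of_nonneg hre0]; linarith
    · subst heq
      rw [hzn]
      have hyn : 0 < y j := lt_of_lt_of_le (by linarith : (0:ℝ) < t) (hyt j)
      rw [Complex.norm_real, Real.norm_eq_abs, Complex.ofReal_re, abs_of_pos hyn]
      linarith
  -- main backward induction
  have key : ∀ d, d ≤ n → y (n - d) - 4 ≤ (z (n - d)).re ∧ (z (n - d)).re ≤ y (n - d) + 4 := by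
    intro d
    induction d with
    | zero =>
      intro _
      simp only [Nat.sub_zero, hzn, Complex.ofReal_re]
      constructor <;> linarith
    | succ d ih =>
      intro hd
      have hdn : d ≤ n := by omega
      obtain ⟨ih1, ih2⟩ := ih hdn
      set k := n - (d+1) with hk
      have hkn : k < n := by omega
      have hk1 : n - d = k + 1 := by omega
      rw [hk1] at ih1 ih2
      have hq_a : q ≤ (z k).re := (horb k hkn).1
      have him_k : |(z k).im| ≤ C := him k hkn
      obtain ⟨s1, s2⟩ := strip_est p hp c C q hqpos hcos hsum (z k) hq_a him_k
      rw [← hzsucc k] at s1 s2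
      set a := (z k).re with ha
      have up : (z (k+1)).re ≤ (3/2)*Real.exp a := le_trans (Complex.re_le_norm _) s2
      have habs1 : ‖z (k+1)‖ ≤ (z (k+1)).re + C := habs (k+1) (by omega) (by omega)
      have hexpa : 4*C ≤ Real.exp a := le_trans hq4C (Real.exp_le_exp.2 hq_a)
      have low : (1/4)*Real.exp a ≤ (z (k+1)).re := by linarith
      have hyk4 : 4 ≤ y k := by linarith [hyt k]
      have hY4 : (4:ℝ) ≤ Real.exp (y k - 1) := by
        have := Real.add_one_le_exp (y k - 1)
        linarith
      -- upper bound on a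
      have hYe : Real.exp (y k - 1) + 4 ≤ Real.exp (y k) := by
        have he : Real.exp (y k) = Real.exp (y k - 1) * Real.exp 1 := by
          rw [← Real.exp_add]; ring_nf
        nlinarith [Real.exp_pos (y k - 1)]
      have h14 : Real.exp (a - 2) ≤ (1/4)*Real.exp a := by
        have he : Real.exp (a - 2) * Real.exp 2 = Real.exp a := by
          rw [← Real.exp_add]; ring_nf
        have h4e2 : (4:ℝ) ≤ Real.exp 2 := by
          have : Real.exp 2 = Real.exp 1 * Real.exp 1 := by rw [← Real.exp_add]; norm_num
          nlinarith
        nlinarith [Real.exp_pos (a-2)]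
      have hcomb : Real.exp (a - 2) ≤ Real.exp (y k) := by
        calc Real.exp (a-2) ≤ (1/4)*Real.exp a := h14
          _ ≤ (z (k+1)).re := low
          _ ≤ y (k+1) + 4 := ih2
          _ = Real.exp (y k - 1) + 4 := by rw [hysucc]
          _ ≤ Real.exp (y k) := hYe
      have hup : a ≤ y k + 2 := by
        have := Real.exp_le_exp.1 hcomb
        linarith
      -- lower bound on a
      have hsv0 : (0:ℝ) ≤ 4 * Real.exp (1 - y k) := by positivity
      have h8e3 : (8:ℝ) ≤ Real.exp 3 := by
        have : Real.exp 3 = Real.exp 1 * Real.exp 1 * Real.exp 1 := by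
          rw [← Real.exp_add, ← Real.exp_add]; norm_num
        nlinarith [Real.exp_pos 1]
      have hsv : 4 * Real.exp (1 - y k) ≤ 1/2 := by
        have h3 : Real.exp (1 - y k) ≤ Real.exp (-3) := Real.exp_le_exp.2 (by linarith)
        have h9 : Real.exp (-3) * Real.exp 3 = 1 := by rw [← Real.exp_add]; norm_num
        nlinarith [Real.exp_pos (-3)]
      have hprod : Real.exp (y k - 1) * (4 * Real.exp (1 - y k)) = 4 := by
        have : Real.exp (y k - 1) * Real.exp (1 - y k) = 1 := by
          rw [← Real.exp_add]; norm_num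
        nlinarith
      have hes := exp_neg_le (4 * Real.exp (1 - y k)) hsv0 hsv
      have hlow1 : Real.exp (y k - 2) ≤ Real.exp (y k - 1) - 4 := by
        calc Real.exp (y k - 2) ≤ Real.exp (y k - 1 - 2*(4 * Real.exp (1 - y k))) :=
              Real.exp_le_exp.2 (by linarith)
          _ = Real.exp (y k - 1) * Real.exp (-(2*(4 * Real.exp (1 - y k)))) := by
              rw [← Real.exp_add]; ring_nf
          _ ≤ Real.exp (y k - 1) * (1 - 4 * Real.exp (1 - y k)) :=
              mul_le_mul_of_nonneg_left hes (le_of_lt (Real.exp_pos _))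
          _ = Real.exp (y k - 1) - 4 := by rw [mul_sub, mul_one, hprod]
      have hlow2 : Real.exp (y k - 2) ≤ Real.exp (a + 1) := by
        calc Real.exp (y k - 2) ≤ Real.exp (y k - 1) - 4 := hlow1
          _ = y (k+1) - 4 := by rw [hysucc]
          _ ≤ (z (k+1)).re := ih1
          _ ≤ (3/2)*Real.exp a := up
          _ ≤ Real.exp (a+1) := by
              rw [Real.exp_add]
              nlinarith [Real.exp_pos a]
      have hlow : y k - 3 ≤ a := by
        have := Real.exp_le_exp.1 hlow2
        linarith
      constructor <;> [skip; skip] <;> linarith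
  have hfin := key n le_rfl
  simp only [Nat.sub_self] at hfin
  have hz0 : z 0 = w := rfl
  have hy0 : y 0 = t := rfl
  rw [hz0, hy0] at hfin
  exact ⟨by linarith [hfin.1], by linarith [hfin.2]⟩
end

section
/- There exists r_0 > 0 such that for every real r > r_0: if r·sin(π/p) is an even integer multiple of π then f(r·exp(iπ/p)) is real and strictly positive, and if r·sin(π/p) is an odd integer multiple of π then f(r·exp(iπ/p)) is real and strictly negative. -/
open Complex Filter Set

/-- angle of the k-th term -/
noncomputable def θa (p k : ℕ) : ℝ := (2 * k + 1) * Real.pi / p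

lemma f_eq (p : ℕ) (hp : 3 ≤ p) (r : ℝ) :
    f p ((r : ℂ) * Complex.exp (Complex.I * (Real.pi / p))) =
      ∑ k ∈ Finset.range p, Complex.exp ((r : ℂ) * Complex.exp ((θa p k : ℝ) * Complex.I)) := by
  have hp0 : (p : ℂ) ≠ 0 := Nat.cast_ne_zero.mpr (by omega)
  unfold f
  refine Finset.sum_congr rfl fun k _ => ?_
  refine congrArg Complex.exp ?_
  rw [← Complex.exp_nat_mul, mul_comm _ ((r : ℂ) * _), mul_assoc, ← Complex.exp_add]
  have hx : Complex.I * ((Real.pi : ℂ) / p) + (k : ℂ) * (2 * Real.pi * Complex.I / p)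
      = ((θa p k : ℝ) : ℂ) * Complex.I := by
    unfold θa
    push_cast
    field_simp
    ring
  rw [hx]

lemma term_re (r θ : ℝ) :
    (Complex.exp ((r : ℂ) * Complex.exp ((θ : ℝ) * Complex.I))).re
      = Real.exp (r * Real.cos θ) * Real.cos (r * Real.sin θ) := by
  rw [Complex.exp_re]
  congr 2 <;> simp [Complex.exp_mul_I, Complex.cos_ofReal_re, Complex.sin_ofReal_re]

lemma term_im (r θ : ℝ) :
    (Complex.exp ((r : ℂ) * Complex.exp ((θ : ℝ) * Complex.I))).im
      = Real.exp (r * Real.cos θ) * Real.sin (r * Real.sin θ) := by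
  rw [Complex.exp_im]
  congr 2 <;> simp [Complex.exp_mul_I, Complex.cos_ofReal_re, Complex.sin_ofReal_re]

theorem sign_alternation_on_V0 (p : ℕ) (hp : 3 ≤ p) :
    ∃ r₀ : ℝ, 0 < r₀ ∧ ∀ r : ℝ, r₀ < r →
      ((∃ n : ℤ, r * Real.sin (Real.pi / p) = 2 * n * Real.pi) →
        (f p ((r : ℂ) * Complex.exp (Complex.I * (Real.pi / p)))).im = 0 ∧
        0 < (f p ((r : ℂ) * Complex.exp (Complex.I * (Real.pi / p)))).re) ∧
      ((∃ n : ℤ, r * Real.sin (Real.pi / p) = (2 * n + 1) * Real.pi) →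
        (f p ((r : ℂ) * Complex.exp (Complex.I * (Real.pi / p)))).im = 0 ∧
        (f p ((r : ℂ) * Complex.exp (Complex.I * (Real.pi / p)))).re < 0) := by
  have hπ : (0:ℝ) < Real.pi := Real.pi_pos
  have hpR : (3:ℝ) ≤ (p:ℝ) := by exact_mod_cast hp
  have hpR0 : (0:ℝ) < (p:ℝ) := by linarith
  set c₁ : ℝ := Real.cos (Real.pi / p) with hc₁
  set c₂ : ℝ := Real.cos (3 * Real.pi / p) with hc₂
  have h3le : 3 * Real.pi / p ≤ Real.pi := by
    rw [div_le_iff₀ hpR0]; nlinarith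
  have hδ : c₂ < c₁ := by
    apply Real.cos_lt_cos_of_nonneg_of_le_pi (by positivity) h3le
    rw [div_lt_div_iff₀ hpR0 hpR0]; nlinarith
  set δ : ℝ := c₁ - c₂ with hδdef
  have hδ0 : 0 < δ := by simp only [hδdef]; linarith
  refine ⟨max 1 (Real.log p / δ), lt_max_of_lt_left one_pos, fun r hr => ?_⟩
  have hr1 : (1:ℝ) < r := lt_of_le_of_lt (le_max_left _ _) hr
  have hr0 : (0:ℝ) < r := by linarith
  -- key exponential inequality
  have hkey : (p : ℝ) * Real.exp (r * c₂) < Real.exp (r * c₁) := by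
    have h1 : Real.log p < r * δ := by
      have h := lt_of_le_of_lt (le_max_right 1 (Real.log p / δ)) hr
      calc Real.log p = (Real.log p / δ) * δ := by field_simp
        _ < r * δ := mul_lt_mul_of_pos_right h hδ0
    have h2 : (p:ℝ) < Real.exp (r * δ) := by
      calc (p:ℝ) = Real.exp (Real.log p) := (Real.exp_log hpR0).symm
        _ < Real.exp (r * δ) := Real.exp_lt_exp.mpr h1
    calc (p:ℝ) * Real.exp (r * c₂) < Real.exp (r * δ) * Real.exp (r * c₂) :=
          mul_lt_mul_of_pos_right h2 (Real.exp_pos _)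
      _ = Real.exp (r * c₁) := by rw [← Real.exp_add]; congr 1; simp only [hδdef]; ring
  -- angles
  have hθ0 : θa p 0 = Real.pi / p := by unfold θa; push_cast; ring
  have hθrefl : ∀ k, k < p → θa p (p - 1 - k) = 2 * Real.pi - θa p k := by
    intro k hk
    unfold θa
    have h1 : ((p - 1 - k : ℕ) : ℝ) = (p : ℝ) - (1 + k) := by
      have h2 : p - 1 - k = p - (1 + k) := by omega
      rw [h2, Nat.cast_sub (by omega)]
      push_cast; ring
    rw [h1]
    field_simp
    ring
  -- imaginary part vanishes
  set z : ℂ := (r : ℂ) * Complex.exp (Complex.I * (Real.pi / p)) with hz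
  have him : (f p z).im = 0 := by
    rw [hz, f_eq p hp r, Complex.im_sum]
    simp only [term_im]
    set g : ℕ → ℝ := fun k => Real.exp (r * Real.cos (θa p k)) * Real.sin (r * Real.sin (θa p k))
      with hg
    show ∑ k ∈ Finset.range p, g k = 0
    have hrefl := Finset.sum_range_reflect g p
    have hneg : ∀ k ∈ Finset.range p, g (p - 1 - k) = -g k := by
      intro k hk
      simp only [hg]
      rw [hθrefl k (Finset.mem_range.mp hk), Real.cos_two_pi_sub, Real.sin_two_pi_sub,
        mul_neg, Real.sin_neg]
      ring
    rw [Finset.sum_congr rfl hneg, Finset.sum_neg_distrib] at hrefl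
    linarith
  -- real part
  set t : ℕ → ℝ := fun k => Real.exp (r * Real.cos (θa p k)) * Real.cos (r * Real.sin (θa p k))
    with ht
  have hre : (f p z).re = ∑ k ∈ Finset.range p, t k := by
    rw [hz, f_eq p hp r, Complex.re_sum]
    simp only [term_re, ht]
  have hset : Finset.range p = insert 0 (insert (p-1) (Finset.Ioo 0 (p-1))) := by
    ext k; simp only [Finset.mem_range, Finset.mem_insert, Finset.mem_Ioo]; omega
  have h0notin : (0:ℕ) ∉ insert (p-1) (Finset.Ioo 0 (p-1)) := by
    simp only [Finset.mem_insert, Finset.mem_Ioo]; omega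
  have h1notin : (p-1) ∉ Finset.Ioo 0 (p-1) := by simp
  have hsplit : ∑ k ∈ Finset.range p, t k
      = t 0 + t (p-1) + ∑ k ∈ Finset.Ioo 0 (p-1), t k := by
    rw [hset, Finset.sum_insert h0notin, Finset.sum_insert h1notin]; ring
  -- bound on middle terms
  have hcosle : ∀ k ∈ Finset.Ioo 0 (p-1), Real.cos (θa p k) ≤ c₂ := by
    intro k hk
    obtain ⟨hk0, hk1⟩ := Finset.mem_Ioo.mp hk
    have h3k : (3:ℝ) ≤ 2 * (k:ℝ) + 1 := by
      have h : (3:ℕ) ≤ 2 * k + 1 := by omega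
      exact_mod_cast h
    have hlb : 3 * Real.pi / p ≤ θa p k := by
      unfold θa
      gcongr
    have hub : θa p k ≤ 2 * Real.pi - 3 * Real.pi / p := by
      have h4 : (2 * (k:ℝ) + 1) ≤ 2 * (p:ℝ) - 3 := by
        have h : 2 * k + 1 + 3 ≤ 2 * p := by omega
        have h5 : ((2 * k + 1 + 3 : ℕ) : ℝ) ≤ ((2 * p : ℕ) : ℝ) := by exact_mod_cast h
        push_cast at h5
        linarith
      have heq : 2 * Real.pi - 3 * Real.pi / p = (2 * (p:ℝ) - 3) * Real.pi / p := by
        field_simp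
      rw [heq]
      unfold θa
      gcongr
    by_cases hcase : θa p k ≤ Real.pi
    · exact Real.cos_le_cos_of_nonneg_of_le_pi (by positivity) hcase hlb
    · push_neg at hcase
      rw [show θa p k = 2 * Real.pi - (2 * Real.pi - θa p k) by ring, Real.cos_two_pi_sub]
      apply Real.cos_le_cos_of_nonneg_of_le_pi (by positivity) (by linarith) (by linarith)
  have hmidterm : ∀ k ∈ Finset.Ioo 0 (p-1), |t k| ≤ Real.exp (r * c₂) := by
    intro k hk
    simp only [ht]
    rw [abs_mul, abs_of_pos (Real.exp_pos _)]
    calc Real.exp (r * Real.cos (θa p k)) * |Real.cos (r * Real.sin (θa p k))|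
        ≤ Real.exp (r * Real.cos (θa p k)) * 1 := by
          exact mul_le_mul_of_nonneg_left (Real.abs_cos_le_one _) (Real.exp_pos _).le
      _ = Real.exp (r * Real.cos (θa p k)) := mul_one _
      _ ≤ Real.exp (r * c₂) := Real.exp_le_exp.mpr
          (mul_le_mul_of_nonneg_left (hcosle k hk) hr0.le)
  have hcard : ((Finset.Ioo 0 (p-1)).card : ℝ) = (p:ℝ) - 2 := by
    rw [Nat.card_Ioo]
    have : p - 1 - 0 - 1 = p - 2 := by omega
    rw [this, Nat.cast_sub (by omega)]
    push_cast; ring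
  have hmid : |∑ k ∈ Finset.Ioo 0 (p-1), t k| ≤ ((p:ℝ) - 2) * Real.exp (r * c₂) := by
    calc |∑ k ∈ Finset.Ioo 0 (p-1), t k| ≤ ∑ k ∈ Finset.Ioo 0 (p-1), |t k| :=
          Finset.abs_sum_le_sum_abs _ _
      _ ≤ (Finset.Ioo 0 (p-1)).card • Real.exp (r * c₂) :=
          Finset.sum_le_card_nsmul _ _ _ hmidterm
      _ = ((p:ℝ) - 2) * Real.exp (r * c₂) := by
          rw [nsmul_eq_mul, hcard]
  have hmid' := abs_le.mp hmid
  -- values of the two extreme angles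
  have hθlast : θa p (p - 1) = 2 * Real.pi - Real.pi / p := by
    have := hθrefl 0 (by omega)
    simpa [hθ0] using this
  have hcos0 : Real.cos (θa p 0) = c₁ := by rw [hθ0]
  have hsin0 : Real.sin (θa p 0) = Real.sin (Real.pi / p) := by rw [hθ0]
  have hcoslast : Real.cos (θa p (p-1)) = c₁ := by rw [hθlast, Real.cos_two_pi_sub]
  have hsinlast : Real.sin (θa p (p-1)) = -Real.sin (Real.pi / p) := by
    rw [hθlast, Real.sin_two_pi_sub]
  have hEpos := Real.exp_pos (r * c₂)
  have hpE : 0 < (p:ℝ) * Real.exp (r * c₂) := mul_pos hpR0 hEpos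
  constructor
  · rintro ⟨n, hn⟩
    refine ⟨him, ?_⟩
    have hcosval : Real.cos (r * Real.sin (Real.pi / p)) = 1 := by
      rw [hn, show (2:ℝ) * n * Real.pi = (n:ℝ) * (2 * Real.pi) by ring,
        Real.cos_int_mul_two_pi]
    have ht0 : t 0 = Real.exp (r * c₁) := by
      simp only [ht, hcos0, hsin0, hcosval, mul_one]
    have htlast : t (p-1) = Real.exp (r * c₁) := by
      simp only [ht, hcoslast, hsinlast, mul_neg, Real.cos_neg, hcosval, mul_one, neg_neg]
    rw [hre, hsplit, ht0, htlast]
    linarith [hmid'.1, hkey, hEpos, hpE]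
  · rintro ⟨n, hn⟩
    refine ⟨him, ?_⟩
    have hcosval : Real.cos (r * Real.sin (Real.pi / p)) = -1 := by
      rw [hn, show ((2:ℝ) * n + 1) * Real.pi = (n:ℝ) * (2 * Real.pi) + Real.pi by ring,
        Real.cos_int_mul_two_pi_add_pi]
    have ht0 : t 0 = -Real.exp (r * c₁) := by
      simp only [ht, hcos0, hsin0, hcosval, mul_neg_one]
    have htlast : t (p-1) = -Real.exp (r * c₁) := by
      simp only [ht, hcoslast, hsinlast, mul_neg, Real.cos_neg, hcosval, mul_neg_one, mul_one, neg_neg]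
    rw [hre, hsplit, ht0, htlast]
    linarith [hmid'.2, hkey, hEpos, hpE]
end

section
/- There exists an integer M ∈ ℕ such that for every integer m > M and every real x: if x > (2m+1)π·cot(π/p) then Re f(x + (2m+1)πi) < 0, and if x > (2m−1)π·cot(π/p) then Re f(x + (2m−1)πi) < 0. -/
open Complex Filter Set

lemma termRe (p k : ℕ) (x y : ℝ) :
    (Complex.exp ((Complex.exp (2*Real.pi*Complex.I/p))^k * (⟨x,y⟩:ℂ))).re
      = Real.exp (Real.cos (2*Real.pi*k/p) * x - Real.sin (2*Real.pi*k/p) * y)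
        * Real.cos (Real.sin (2*Real.pi*k/p) * x + Real.cos (2*Real.pi*k/p) * y) := by
  rw [← Complex.exp_nat_mul]
  have h : (k:ℂ) * (2*Real.pi*Complex.I/p) = ((2*Real.pi*k/p : ℝ) : ℂ) * Complex.I := by
    push_cast; ring
  rw [h, Complex.exp_mul_I, ← Complex.ofReal_cos, ← Complex.ofReal_sin]
  set θ : ℝ := 2*Real.pi*k/p with hθ
  have hre : (((Real.cos θ : ℂ) + (Real.sin θ : ℂ)*Complex.I) * (⟨x,y⟩:ℂ)).re
      = Real.cos θ * x - Real.sin θ * y := by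
    simp [Complex.mul_re, Complex.cos_ofReal_re, Complex.sin_ofReal_re]
  have him : (((Real.cos θ : ℂ) + (Real.sin θ : ℂ)*Complex.I) * (⟨x,y⟩:ℂ)).im
      = Real.sin θ * x + Real.cos θ * y := by
    simp [Complex.mul_im, Complex.cos_ofReal_re, Complex.sin_ofReal_re]; ring
  rw [Complex.exp_re, hre, him]

lemma cos_two_mul'' (x : ℝ) : Real.cos (2*x) = 1 - 2*Real.sin x^2 := by
  rw [Real.cos_two_mul]; nlinarith [Real.sin_sq_add_cos_sq x]

/-- positivity of the exponent-gap coefficient for the middle terms -/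
lemma gpos (u v : ℝ) (hu : 0 < u) (hv : 0 < v) (huv : u + v < Real.pi) :
    0 < (1 - Real.cos (2*u)) * (Real.cos v / Real.sin v) + Real.sin (2*u) := by
  have hsv : 0 < Real.sin v := Real.sin_pos_of_pos_of_lt_pi hv (by linarith)
  have hsu : 0 < Real.sin u := Real.sin_pos_of_pos_of_lt_pi hu (by linarith)
  have hs : 0 < Real.sin (u+v) := Real.sin_pos_of_pos_of_lt_pi (by linarith) huv
  have h1 : (1 - Real.cos (2*u)) * (Real.cos v / Real.sin v) + Real.sin (2*u)
      = (2 * Real.sin u / Real.sin v) * Real.sin (u+v) := by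
    rw [Real.sin_add, cos_two_mul'', Real.sin_two_mul]
    field_simp
    ring
  rw [h1]
  positivity

set_option maxHeartbeats 1000000 in
lemma key (p : ℕ) (hp : 3 ≤ p) :
    ∃ Y : ℝ, ∀ (n : ℤ) (x : ℝ), Y ≤ (2*(n:ℝ)+1)*Real.pi →
      x > (2*(n:ℝ)+1)*Real.pi * (Real.cos (Real.pi/p) / Real.sin (Real.pi/p)) →
      (f p ⟨x, (2*(n:ℝ)+1)*Real.pi⟩).re < 0 := by
  have hp0 : (0:ℝ) < p := by positivity
  set v : ℝ := Real.pi / p with hv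
  have hv0 : 0 < v := by positivity
  have hv3 : v ≤ Real.pi / 3 :=
    div_le_div_of_nonneg_left Real.pi_pos.le (by norm_num) (by exact_mod_cast hp)
  have hvlt : v < Real.pi / 2 := lt_of_le_of_lt hv3 (by linarith [Real.pi_pos])
  have hsv : 0 < Real.sin v := Real.sin_pos_of_pos_of_lt_pi hv0 (by linarith [Real.pi_pos])
  set s : ℝ := Real.sin (2*v) with hsdef
  set c : ℝ := Real.cos (2*v) with hcdef
  have hs : 0 < s := Real.sin_pos_of_pos_of_lt_pi (by linarith) (by linarith)
  have h1c : 0 < 1 - c := by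
    rw [hcdef, cos_two_mul'']; nlinarith
  -- key trig identities
  have hid1 : (1 - c) * (Real.cos v / Real.sin v) = s := by
    rw [hcdef, hsdef, cos_two_mul'', Real.sin_two_mul]
    field_simp; ring
  have hid2 : c - s * (Real.cos v / Real.sin v) = -1 := by
    rw [hcdef, hsdef, cos_two_mul'', Real.sin_two_mul]
    field_simp
    nlinarith [Real.sin_sq_add_cos_sq v]
  set δ₀ : ℝ := (1-c) * (Real.pi/(2*s)) with hδ₀def
  have hδ₀ : 0 < δ₀ := by positivity
  set ε : ℝ := 1 - Real.exp (-δ₀) with hεdef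
  have hε : 0 < ε := by
    have : Real.exp (-δ₀) < Real.exp 0 := Real.exp_lt_exp.mpr (by linarith)
    rw [Real.exp_zero] at this; linarith
  have hε1 : ε < 1 := by
    have := Real.exp_pos (-δ₀); simp [hεdef]; linarith
  -- the middle-term index set and uniform gap β
  set K : Finset ℕ := Finset.Ioo 0 (p-1) with hK
  have hKne : K.Nonempty := ⟨1, by simp [hK]; omega⟩
  set g : ℕ → ℝ := fun k =>
    (1 - Real.cos (2*Real.pi*k/p)) * (Real.cos v / Real.sin v) + Real.sin (2*Real.pi*k/p)
    with hg
  set β : ℝ := K.inf' hKne g with hβdef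
  have hgpos : ∀ k ∈ K, 0 < g k := by
    intro k hk
    simp only [hK, Finset.mem_Ioo] at hk
    have hk1 : 1 ≤ k := hk.1
    have hk2 : k + 1 ≤ p - 1 := hk.2
    have harg : 2*Real.pi*k/p = 2*(Real.pi*k/p) := by ring
    have hu : 0 < Real.pi*k/p := by
      have : (0:ℝ) < k := by exact_mod_cast hk1
      positivity
    have huv : Real.pi*k/p + v < Real.pi := by
      rw [hv, ← add_div, div_lt_iff₀ hp0]
      have : (k:ℝ) + 1 ≤ (p:ℝ) - 1 := by
        have : ((k+1:ℕ):ℝ) ≤ ((p-1:ℕ):ℝ) := by exact_mod_cast hk2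
        push_cast [Nat.cast_sub (by omega : 1 ≤ p)] at this
        linarith
      nlinarith [Real.pi_pos]
    have := gpos (Real.pi*k/p) v hu hv0 huv
    simpa [hg, harg] using this
  have hβ : 0 < β := (Finset.lt_inf'_iff hKne).mpr hgpos
  have hβle : ∀ k ∈ K, β ≤ (1 - Real.cos (2*Real.pi*k/p)) * (Real.cos v / Real.sin v)
      + Real.sin (2*Real.pi*k/p) := fun k hk => Finset.inf'_le g hk
  clear hβdef
  clear_value β
  clear hgpos hg
  clear_value g
  clear g
  -- choose the threshold Y
  have htend : Tendsto (fun y : ℝ => ((p:ℝ)-2) * Real.exp (-(β*y))) atTop (nhds 0) := by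
    have h1 : Tendsto (fun y : ℝ => β*y) atTop atTop :=
      Filter.Tendsto.const_mul_atTop hβ tendsto_id
    have h2 := Real.tendsto_exp_neg_atTop_nhds_zero.comp h1
    have := h2.const_mul ((p:ℝ)-2)
    simpa using this
  obtain ⟨Y, hY⟩ := eventually_atTop.1
    ((htend.eventually_lt_const hε).and (eventually_ge_atTop 1))
  refine ⟨Y, ?_⟩
  intro n x hYy hx
  set y : ℝ := (2*(n:ℝ)+1)*Real.pi with hydef
  obtain ⟨hsmall, hy1⟩ := hY y hYy
  have hy0 : 0 < y := by linarith
  have hcosy : Real.cos y = -1 := by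
    rw [show y = (n:ℝ)*(2*Real.pi)+Real.pi by rw [hydef]; ring]
    exact_mod_cast Real.cos_int_mul_two_pi_add_pi n
  have hsiny : Real.sin y = 0 := by
    rw [show y = ((2*n+1:ℤ):ℝ)*Real.pi by rw [hydef]; push_cast; ring]
    exact Real.sin_int_mul_pi _
  clear hydef hYy
  clear_value y
  set t : ℝ := x - y * (Real.cos v / Real.sin v) with htdef
  have ht : 0 < t := by rw [htdef]; linarith [hx]
  -- split the sum
  have hsplit : Finset.range p = insert 0 (insert (p-1) K) := by
    ext k; simp [hK, Finset.mem_Ioo, Finset.mem_range]; omega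
  have hnotin1 : (p-1) ∉ K := by simp [hK]
  have hnotin0 : 0 ∉ insert (p-1) K := by simp [hK]; omega
  rw [f, Complex.re_sum, hsplit, Finset.sum_insert hnotin0, Finset.sum_insert hnotin1]
  -- the k = 0 term
  have h0 : (Complex.exp ((Complex.exp (2*Real.pi*Complex.I/p))^0 * (⟨x,y⟩:ℂ))).re
      = -Real.exp x := by
    rw [termRe]
    norm_num [hcosy]
  -- the k = p-1 term
  have hlastarg : 2*Real.pi*((p-1:ℕ):ℝ)/p = 2*Real.pi - 2*v := by
    rw [hv]
    push_cast [Nat.cast_sub (by omega : 1 ≤ p)]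
    field_simp
  have hexparg : c*x + s*y = x - (1-c)*t := by
    rw [htdef]; linear_combination (-y) * hid1
  have hcosarg : -s*x + c*y = -(y + s*t) := by
    rw [htdef]; linear_combination y * hid2
  clear htdef
  clear_value t
  have hlast : (Complex.exp ((Complex.exp (2*Real.pi*Complex.I/p))^(p-1) * (⟨x,y⟩:ℂ))).re
      = -(Real.exp (x - (1-c)*t) * Real.cos (s*t)) := by
    rw [termRe]
    rw [hlastarg, Real.cos_two_pi_sub, Real.sin_two_pi_sub, ← hcdef, ← hsdef]
    rw [show c*x - (-s)*y = c*x + s*y by ring, hexparg,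
        show (-s)*x + c*y = -s*x + c*y by ring, hcosarg]
    rw [Real.cos_neg, Real.cos_add, hcosy, hsiny]
    ring
  rw [h0, hlast]
  -- bound the middle terms
  have hmid : ∑ k ∈ K, (Complex.exp ((Complex.exp (2*Real.pi*Complex.I/p))^k * (⟨x,y⟩:ℂ))).re
      ≤ ((p:ℝ)-2) * Real.exp (x - β*y) := by
    have hbound : ∀ k ∈ K,
        (Complex.exp ((Complex.exp (2*Real.pi*Complex.I/p))^k * (⟨x,y⟩:ℂ))).re
          ≤ Real.exp (x - β*y) := by
      intro k hk
      rw [termRe]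
      have hck : 0 < 1 - Real.cos (2*Real.pi*k/p) := by
        simp only [hK, Finset.mem_Ioo] at hk
        have hu : 0 < Real.pi*k/p := by
          have : (0:ℝ) < k := by exact_mod_cast hk.1
          positivity
        have hu' : Real.pi*k/p < Real.pi := by
          rw [div_lt_iff₀ hp0]
          have : (k:ℝ) < p := by exact_mod_cast (by omega : k < p)
          nlinarith [Real.pi_pos]
        have := cos_two_mul'' (Real.pi*k/p)
        have hsu : 0 < Real.sin (Real.pi*k/p) := Real.sin_pos_of_pos_of_lt_pi hu hu'
        rw [show 2*Real.pi*(k:ℝ)/p = 2*(Real.pi*k/p) by ring, this]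
        nlinarith
      have hexp : Real.cos (2*Real.pi*k/p) * x - Real.sin (2*Real.pi*k/p) * y
          ≤ x - β*y := by
        have hgk : β ≤ (1 - Real.cos (2*Real.pi*k/p)) * (Real.cos v / Real.sin v)
            + Real.sin (2*Real.pi*k/p) := hβle k hk
        have h1 : (1 - Real.cos (2*Real.pi*k/p)) * x
            > (1 - Real.cos (2*Real.pi*k/p)) * (y * (Real.cos v / Real.sin v)) := by
          exact mul_lt_mul_of_pos_left hx hck
        have h2 : x - (Real.cos (2*Real.pi*k/p) * x - Real.sin (2*Real.pi*k/p) * y)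
            ≥ y * ((1 - Real.cos (2*Real.pi*k/p)) * (Real.cos v / Real.sin v)
              + Real.sin (2*Real.pi*k/p)) := by
          nlinarith
        have h3 : β * y ≤ y * ((1 - Real.cos (2*Real.pi*k/p)) * (Real.cos v / Real.sin v)
            + Real.sin (2*Real.pi*k/p)) := by
          rw [mul_comm]; exact mul_le_mul_of_nonneg_left hgk hy0.le
        linarith
      calc Real.exp (Real.cos (2*Real.pi*k/p) * x - Real.sin (2*Real.pi*k/p) * y)
            * Real.cos (Real.sin (2*Real.pi*k/p) * x + Real.cos (2*Real.pi*k/p) * y)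
          ≤ Real.exp (Real.cos (2*Real.pi*k/p) * x - Real.sin (2*Real.pi*k/p) * y) * 1 := by
            have := Real.exp_pos (Real.cos (2*Real.pi*k/p) * x - Real.sin (2*Real.pi*k/p) * y)
            nlinarith [Real.cos_le_one (Real.sin (2*Real.pi*k/p) * x + Real.cos (2*Real.pi*k/p) * y)]
        _ = Real.exp (Real.cos (2*Real.pi*k/p) * x - Real.sin (2*Real.pi*k/p) * y) := mul_one _
        _ ≤ Real.exp (x - β*y) := Real.exp_le_exp.mpr hexp
    have := Finset.sum_le_card_nsmul K _ _ hbound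
    have hcard : K.card = p - 2 := by
      rw [hK, Nat.card_Ioo]; omega
    rw [hcard] at this
    have hc2 : ((p-2:ℕ):ℝ) = (p:ℝ) - 2 := by
      push_cast [Nat.cast_sub (by omega : 2 ≤ p)]; ring
    calc _ ≤ (p-2) • Real.exp (x - β*y) := this
      _ = ((p-2:ℕ):ℝ) * Real.exp (x - β*y) := by rw [nsmul_eq_mul]
      _ = ((p:ℝ)-2) * Real.exp (x - β*y) := by rw [hc2]
  -- combine
  have hSε : ((p:ℝ)-2) * Real.exp (x - β*y) < ε * Real.exp x := by
    rw [show x - β*y = -(β*y) + x by ring, Real.exp_add]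
    calc ((p:ℝ)-2) * (Real.exp (-(β*y)) * Real.exp x)
        = (((p:ℝ)-2) * Real.exp (-(β*y))) * Real.exp x := by ring
      _ < ε * Real.exp x := by
          exact mul_lt_mul_of_pos_right hsmall (Real.exp_pos x)
  have hex := Real.exp_pos x
  by_cases hst : s*t ≤ Real.pi/2
  · have hcosst : 0 ≤ Real.cos (s*t) := by
      apply Real.cos_nonneg_of_mem_Icc
      constructor
      · nlinarith [Real.pi_pos]
      · exact hst
    have hE := Real.exp_pos (x - (1-c)*t)
    have hEc : 0 ≤ Real.exp (x - (1-c)*t) * Real.cos (s*t) := mul_nonneg hE.le hcosst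
    have hεx : ε * Real.exp x < Real.exp x := by nlinarith
    linarith [hmid, hSε]
  · push_neg at hst
    have htbig : δ₀ < (1-c)*t := by
      rw [hδ₀def]
      have : Real.pi/(2*s) < t := by
        rw [div_lt_iff₀ (by linarith)]
        nlinarith
      exact mul_lt_mul_of_pos_left this h1c
    have hEbig : Real.exp (x - (1-c)*t) < Real.exp (-δ₀) * Real.exp x := by
      rw [← Real.exp_add]
      exact Real.exp_lt_exp.mpr (by linarith)
    have hE := Real.exp_pos (x - (1-c)*t)
    have hcosge : -1 ≤ Real.cos (s*t) := Real.neg_one_le_cos (s*t)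
    have h4 : -(Real.exp (x - (1-c)*t) * Real.cos (s*t)) ≤ Real.exp (x - (1-c)*t) := by
      nlinarith
    have hεx : ε * Real.exp x = Real.exp x - Real.exp (-δ₀) * Real.exp x := by
      rw [hεdef]; ring
    linarith [hmid, hSε]

theorem image_of_horizontal_lines_in_left_half_plane (p : ℕ) (hp : 3 ≤ p) :
    ∃ M : ℕ, ∀ m : ℤ, (M : ℤ) < m → ∀ x : ℝ,
      (x > (2 * (m : ℝ) + 1) * Real.pi * (Real.cos (Real.pi / p) / Real.sin (Real.pi / p)) →
        (f p (⟨x, (2 * (m : ℝ) + 1) * Real.pi⟩ : ℂ)).re < 0) ∧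
      (x > (2 * (m : ℝ) - 1) * Real.pi * (Real.cos (Real.pi / p) / Real.sin (Real.pi / p)) →
        (f p (⟨x, (2 * (m : ℝ) - 1) * Real.pi⟩ : ℂ)).re < 0) := by
  obtain ⟨Y, hY⟩ := key p hp
  refine ⟨⌈Y⌉₊ + 1, ?_⟩
  intro m hm x
  have hpi := Real.pi_gt_three
  have hYm : Y ≤ ⌈Y⌉₊ + 1 := by
    have := Nat.le_ceil Y; push_cast; linarith
  have hm' : ((⌈Y⌉₊:ℝ) + 1) < (m:ℝ) := by exact_mod_cast hm
  constructor
  · intro hx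
    have h1 : Y ≤ (2*(m:ℝ)+1)*Real.pi := by nlinarith [Nat.cast_nonneg (α := ℝ) ⌈Y⌉₊]
    exact hY m x h1 hx
  · intro hx
    have hcast : (2*(m:ℝ) - 1) = 2*((m-1:ℤ):ℝ) + 1 := by push_cast; ring
    rw [hcast] at hx ⊢
    have h1 : Y ≤ (2*((m-1:ℤ):ℝ)+1)*Real.pi := by
      push_cast
      nlinarith [Nat.cast_nonneg (α := ℝ) ⌈Y⌉₊]
    exact hY (m-1) x h1 hx
end

section
/- There exists an integer M_0 ∈ ℕ such that for every integer m > M_0 and every ε ∈ (0,1) there exists c_0 > 0 with the following property: for all c ≥ c_0 and every z ∈ ℂ with Re z ≥ c and (2m−1)π ≤ Im z ≤ (2m+1)π, if Re f(z) > 0 then |f(z)| > (1−ε)·e^c. -/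
open Complex Filter Set

set_option maxHeartbeats 1000000 in
theorem modulus_lower_bound_in_half_strip (p : ℕ) (hp : 3 ≤ p) :
    ∃ M₀ : ℕ, ∀ m : ℤ, (M₀ : ℤ) < m → ∀ ε : ℝ, 0 < ε → ε < 1 →
      ∃ c₀ : ℝ, 0 < c₀ ∧ ∀ c : ℝ, c₀ ≤ c → ∀ z : ℂ,
        c ≤ z.re → (2 * (m : ℝ) - 1) * Real.pi ≤ z.im → z.im ≤ (2 * (m : ℝ) + 1) * Real.pi →
        0 < (f p z).re → (1 - ε) * Real.exp c < ‖f p z‖ := by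
  have hπ := Real.pi_pos
  have hp0 : (0:ℝ) < p := by positivity
  set a : ℝ := Real.cos (2 * Real.pi / p) with ha_def
  have hap : 2 * Real.pi / p ≤ Real.pi := by
    rw [div_le_iff₀ hp0]
    nlinarith [mul_le_mul_of_nonneg_left (by exact_mod_cast hp : (3:ℝ) ≤ p) hπ.le]
  have ha1 : a < 1 := by
    have := Real.cos_lt_cos_of_nonneg_of_le_pi (le_refl 0) hap
      (by positivity : (0:ℝ) < 2 * Real.pi / p)
    simpa [ha_def] using this
  -- key cosine bound
  have hcos : ∀ k : ℕ, 1 ≤ k → k < p → Real.cos (2 * Real.pi * k / p) ≤ a := by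
    intro k hk1 hkp
    have hk1' : (1:ℝ) ≤ k := by exact_mod_cast hk1
    have hkp' : (k:ℝ) ≤ (p:ℝ) - 1 := by
      have : (k:ℝ) + 1 ≤ p := by exact_mod_cast hkp
      linarith
    set θ : ℝ := 2 * Real.pi * k / p with hθ_def
    have hθ1 : 2 * Real.pi / p ≤ θ := by
      rw [hθ_def, div_le_div_iff₀ hp0 hp0]
      nlinarith [mul_le_mul_of_nonneg_left hk1' (by positivity : (0:ℝ) ≤ 2 * Real.pi * p)]
    have hθ2 : θ ≤ 2 * Real.pi - 2 * Real.pi / p := by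
      rw [hθ_def]
      rw [div_le_iff₀ hp0]
      have h2 : 2 * Real.pi / p * p = 2 * Real.pi := by field_simp
      nlinarith [mul_le_mul_of_nonneg_left hkp' (by positivity : (0:ℝ) ≤ 2 * Real.pi)]
    have h0p : 0 < 2 * Real.pi / p := by positivity
    rcases le_or_gt θ Real.pi with hθπ | hθπ
    · exact Real.cos_le_cos_of_nonneg_of_le_pi (le_of_lt h0p) hθπ hθ1
    · have heq : Real.cos θ = Real.cos (2 * Real.pi - θ) := by
        rw [Real.cos_sub, Real.cos_two_pi, Real.sin_two_pi]; ring
      rw [heq]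
      exact Real.cos_le_cos_of_nonneg_of_le_pi (le_of_lt h0p) (by linarith) (by linarith)
  refine ⟨0, ?_⟩
  intro m hm ε hε hε1
  set B : ℝ := (2 * (m : ℝ) + 1) * Real.pi with hB_def
  have hm1 : (1:ℝ) ≤ (m:ℝ) := by exact_mod_cast hm
  have hB0 : 0 < B := by nlinarith
  have h1a : 0 < 1 - a := by linarith
  set c₀ : ℝ := max 1 ((Real.log ((p:ℝ) * Real.exp B / ε) + 1) / (1 - a)) with hc₀_def
  refine ⟨c₀, lt_of_lt_of_le one_pos (le_max_left _ _), ?_⟩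
  intro c hc z hre him1 him2 _hpos
  set x := z.re with hx_def
  set y := z.im with hy_def
  have hx0 : 0 < x := lt_of_lt_of_le (lt_of_lt_of_le one_pos ((le_max_left _ _).trans hc)) hre
  have hy0 : 0 ≤ y := le_trans (by nlinarith) him1
  have hyB : y ≤ B := him2
  -- ω^k as exp of purely imaginary
  have hωk : ∀ k : ℕ, Complex.exp (2 * Real.pi * Complex.I / p) ^ k
      = Complex.exp (((2 * Real.pi * k / p : ℝ) : ℂ) * Complex.I) := by
    intro k
    rw [← Complex.exp_nat_mul]
    congr 1
    push_cast
    ring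
  -- modulus of each term
  have habs : ∀ k : ℕ, ‖Complex.exp (Complex.exp (2 * Real.pi * Complex.I / p) ^ k * z)‖
      = Real.exp (Real.cos (2 * Real.pi * k / p) * x - Real.sin (2 * Real.pi * k / p) * y) := by
    intro k
    rw [hωk k, Complex.norm_exp, Complex.mul_re, Complex.exp_ofReal_mul_I_re,
      Complex.exp_ofReal_mul_I_im]
  -- term at k = 0
  have habs0 : ‖Complex.exp (Complex.exp (2 * Real.pi * Complex.I / p) ^ 0 * z)‖
      = Real.exp x := by
    rw [pow_zero, one_mul, Complex.norm_exp]
  -- bound on the sum over k ≠ 0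
  set S := ∑ k ∈ (Finset.range p).erase 0,
      ‖Complex.exp (Complex.exp (2 * Real.pi * Complex.I / p) ^ k * z)‖ with hS_def
  have hSle : S ≤ ((p:ℝ) - 1) * Real.exp (a * x + B) := by
    have hb : ∀ k ∈ (Finset.range p).erase 0,
        ‖Complex.exp (Complex.exp (2 * Real.pi * Complex.I / p) ^ k * z)‖
        ≤ Real.exp (a * x + B) := by
      intro k hk
      rw [Finset.mem_erase, Finset.mem_range] at hk
      rw [habs k]
      apply Real.exp_le_exp.2
      have hc1 := hcos k (Nat.one_le_iff_ne_zero.2 hk.1) hk.2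
      have hs1 : |Real.sin (2 * Real.pi * k / p)| ≤ 1 := Real.abs_sin_le_one _
      have hs2 : -Real.sin (2 * Real.pi * k / p) * y ≤ B := by
        have := neg_abs_le (Real.sin (2 * Real.pi * k / p))
        nlinarith
      nlinarith
    calc S ≤ ∑ _k ∈ (Finset.range p).erase 0, Real.exp (a * x + B) :=
          Finset.sum_le_sum hb
      _ = ((p:ℝ) - 1) * Real.exp (a * x + B) := by
          rw [Finset.sum_const, Finset.card_erase_of_mem (Finset.mem_range.2 (by omega)),
            Finset.card_range, nsmul_eq_mul]
          have : ((p - 1 : ℕ) : ℝ) = (p:ℝ) - 1 := by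
            have : 1 ≤ p := by omega
            push_cast [this]
            ring
          rw [this]
  -- triangle inequality: exp x ≤ |f p z| + S
  have htri : Real.exp x ≤ ‖f p z‖ + S := by
    have hsplit : Complex.exp (Complex.exp (2 * Real.pi * Complex.I / p) ^ 0 * z)
        = f p z - ∑ k ∈ (Finset.range p).erase 0,
            Complex.exp (Complex.exp (2 * Real.pi * Complex.I / p) ^ k * z) := by
      rw [f, ← Finset.add_sum_erase _ _ (Finset.mem_range.2 (by omega : 0 < p))]
      ring
    calc Real.exp x
        = ‖Complex.exp (Complex.exp (2 * Real.pi * Complex.I / p) ^ 0 * z)‖ :=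
          habs0.symm
      _ ≤ ‖f p z‖ + ‖∑ k ∈ (Finset.range p).erase 0,
            Complex.exp (Complex.exp (2 * Real.pi * Complex.I / p) ^ k * z)‖ := by
          rw [hsplit]; exact norm_sub_le _ _
      _ ≤ ‖f p z‖ + S := by
          gcongr
          exact norm_sum_le _ _
  -- the smallness of the tail
  have hsmall : ((p:ℝ) - 1) * Real.exp (a * x + B) < ε * Real.exp x := by
    have hxc : (Real.log ((p:ℝ) * Real.exp B / ε) + 1) / (1 - a) ≤ x :=
      le_trans (le_trans (le_max_right _ _) hc) hre
    have hlog : Real.log ((p:ℝ) * Real.exp B / ε) + 1 ≤ (1 - a) * x := by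
      rw [div_le_iff₀ h1a] at hxc
      linarith
    have hpos : (0:ℝ) < (p:ℝ) * Real.exp B / ε := by positivity
    have h2 : (p:ℝ) * Real.exp B / ε * Real.exp 1 ≤ Real.exp ((1 - a) * x) := by
      calc (p:ℝ) * Real.exp B / ε * Real.exp 1
          = Real.exp (Real.log ((p:ℝ) * Real.exp B / ε) + 1) := by
            rw [Real.exp_add, Real.exp_log hpos]
        _ ≤ Real.exp ((1 - a) * x) := Real.exp_le_exp.2 hlog
    have hkey : (p:ℝ) * Real.exp B * Real.exp 1 ≤ ε * Real.exp ((1 - a) * x) := by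
      rw [div_mul_eq_mul_div, div_le_iff₀ hε] at h2
      linarith [mul_comm (Real.exp ((1-a)*x)) ε]
    have hsplit2 : Real.exp x = Real.exp (a * x) * Real.exp ((1 - a) * x) := by
      rw [← Real.exp_add]; ring_nf
    have he1 : (1:ℝ) < Real.exp 1 := by
      have := Real.add_one_le_exp (1:ℝ); linarith
    have hax : Real.exp (a * x + B) = Real.exp (a * x) * Real.exp B := by
      rw [← Real.exp_add]
    rw [hax, hsplit2]
    have hexpax : 0 < Real.exp (a * x) := Real.exp_pos _
    have hexpB : 0 < Real.exp B := Real.exp_pos _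
    have h3 := mul_le_mul_of_nonneg_right hkey hexpax.le
    calc ((p:ℝ) - 1) * (Real.exp (a * x) * Real.exp B)
        ≤ (p:ℝ) * (Real.exp (a * x) * Real.exp B) := by
          nlinarith [mul_pos hexpax hexpB]
      _ < (p:ℝ) * (Real.exp (a * x) * Real.exp B) * Real.exp 1 := by
          nlinarith [mul_pos (mul_pos hp0 hexpB) hexpax]
      _ = (p:ℝ) * Real.exp B * Real.exp 1 * Real.exp (a * x) := by ring
      _ ≤ ε * Real.exp ((1 - a) * x) * Real.exp (a * x) := h3
      _ = ε * (Real.exp (a * x) * Real.exp ((1 - a) * x)) := by ring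
  have hcx : Real.exp c ≤ Real.exp x := Real.exp_le_exp.2 hre
  have hfin : (1 - ε) * Real.exp c ≤ (1 - ε) * Real.exp x :=
    mul_le_mul_of_nonneg_left hcx (by linarith)
  have hfin' : (1 - ε) * Real.exp x = Real.exp x - ε * Real.exp x := by ring
  linarith
end
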